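/- Fix constants τ, β with 0 < τ < β, and suppose there exist constants C₀ > 0 and λ > 0 with τλ < 1 such that for every ξ ∈ ℝ³ and every differentiable solution (û, v̂, ŵ) : [0, ∞) → ℂ³ of the Fourier-mode linearized JMGT system one has |V̂(t)|² ≤ C₀ |V̂(0)|² exp(−λ |ξ|²/(1 + |ξ|²) · t) for all t ≥ 0, where |V̂(t)|² = |v̂(t) + τŵ(t)|² + |ξ|²|û(t) + τv̂(t)|² + |ξ|²|v̂(t)|². Then there exists a constant C > 0, depending only on τ, β, C₀, λ, such that for every ξ ∈ ℝ³ and every such solution, for all t ≥ 0: |ŵ(t)|² ≤ |ŵ(0)|² e^{−t/τ} + C |ξ|² |V̂(0)|² exp(−λ |ξ|²/(1 + |ξ|²) · t). -/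

import Mathlib

set_option maxHeartbeats 1000000

lemma jmgt_normSq_add_le (a b : ℂ) :
    Complex.normSq (a + b) ≤ 2 * Complex.normSq a + 2 * Complex.normSq b := by
  simp only [Complex.normSq_apply, Complex.add_re, Complex.add_im]
  nlinarith [sq_nonneg (a.re - b.re), sq_nonneg (a.im - b.im)]


/-- Decay of `|ŵ|²` for the Fourier-mode linearized JMGT system: assuming the energy
`|V̂(t)|² = |v̂+τŵ|² + |ξ|²|û+τv̂|² + |ξ|²|v̂|²` decays like
`C₀|V̂(0)|² exp(−λ|ξ|²/(1+|ξ|²)t)` with `τλ < 1`, there is `C > 0` such that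
`|ŵ(t)|² ≤ |ŵ(0)|² e^{−t/τ} + C|ξ|²|V̂(0)|² exp(−λ|ξ|²/(1+|ξ|²)t)`. -/
theorem jmgt_w_decay (τ β : ℝ) (hτ : 0 < τ) (hτβ : τ < β)
    (C₀ lam : ℝ) (hC₀ : 0 < C₀) (hlam : 0 < lam) (hτlam : τ * lam < 1)
    (hdecay : ∀ (ξ : EuclideanSpace ℝ (Fin 3)) (u v w w' : ℝ → ℂ),
      (∀ t ≥ (0 : ℝ), HasDerivAt u (v t) t) →
      (∀ t ≥ (0 : ℝ), HasDerivAt v (w t) t) →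
      (∀ t ≥ (0 : ℝ), HasDerivAt w (w' t) t) →
      (∀ t ≥ (0 : ℝ), (τ : ℂ) * w' t =
        -((‖ξ‖ ^ 2 : ℝ) : ℂ) * u t - ((β * ‖ξ‖ ^ 2 : ℝ) : ℂ) * v t - w t) →
      ∀ t ≥ (0 : ℝ),
        ‖v t + (τ : ℂ) * w t‖ ^ 2
          + ‖ξ‖ ^ 2 * ‖u t + (τ : ℂ) * v t‖ ^ 2
          + ‖ξ‖ ^ 2 * ‖v t‖ ^ 2 ≤
        C₀ * (‖v 0 + (τ : ℂ) * w 0‖ ^ 2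
          + ‖ξ‖ ^ 2 * ‖u 0 + (τ : ℂ) * v 0‖ ^ 2
          + ‖ξ‖ ^ 2 * ‖v 0‖ ^ 2)
          * Real.exp (-lam * (‖ξ‖ ^ 2 / (1 + ‖ξ‖ ^ 2)) * t)) :
    ∃ C > (0 : ℝ),
      ∀ (ξ : EuclideanSpace ℝ (Fin 3)) (u v w w' : ℝ → ℂ),
        (∀ t ≥ (0 : ℝ), HasDerivAt u (v t) t) →
        (∀ t ≥ (0 : ℝ), HasDerivAt v (w t) t) →
        (∀ t ≥ (0 : ℝ), HasDerivAt w (w' t) t) →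
        (∀ t ≥ (0 : ℝ), (τ : ℂ) * w' t =
          -((‖ξ‖ ^ 2 : ℝ) : ℂ) * u t - ((β * ‖ξ‖ ^ 2 : ℝ) : ℂ) * v t - w t) →
        ∀ t ≥ (0 : ℝ),
          ‖w t‖ ^ 2 ≤
            ‖w 0‖ ^ 2 * Real.exp (-t / τ)
              + C * ‖ξ‖ ^ 2 * (‖v 0 + (τ : ℂ) * w 0‖ ^ 2
                + ‖ξ‖ ^ 2 * ‖u 0 + (τ : ℂ) * v 0‖ ^ 2
                + ‖ξ‖ ^ 2 * ‖v 0‖ ^ 2)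
                * Real.exp (-lam * (‖ξ‖ ^ 2 / (1 + ‖ξ‖ ^ 2)) * t) := by
  set M : ℝ := 2 * (1 + (β - τ) ^ 2) with hMdef
  have hM0 : 0 < M := by positivity
  have hM2 : 2 ≤ M := by nlinarith [sq_nonneg (β - τ)]
  have hMb : 2 * (β - τ) ^ 2 ≤ M := by rw [hMdef]; linarith
  clear_value M
  have h1tl : 0 < 1 - τ * lam := by linarith
  refine ⟨M * C₀ / (1 - τ * lam), div_pos (mul_pos hM0 hC₀) h1tl, ?_⟩
  intro ξ u v w w' hu hv hw hode t ht
  have hEdecay := hdecay ξ u v w w' hu hv hw hode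
  clear hdecay hu hv
  set r : ℝ := ‖ξ‖ ^ 2 with hrdef
  have hr0 : (0 : ℝ) ≤ r := by positivity
  clear_value r
  set μ : ℝ := r / (1 + r) with hμdef
  have h1r : (0:ℝ) < 1 + r := by linarith
  have hμ0 : 0 ≤ μ := div_nonneg hr0 h1r.le
  have hμ1 : μ ≤ 1 := by
    rw [hμdef, div_le_one h1r]; linarith
  clear_value μ
  have hlamμ : lam * μ ≤ lam := mul_le_of_le_one_right hlam.le hμ1
  set κ : ℝ := 1 / τ - lam * μ with hκdef
  have hκ0 : 0 < κ := by
    rw [hκdef]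
    have hlt : lam < 1 / τ := by rw [lt_div_iff₀ hτ]; nlinarith
    linarith
  have hτκ : 1 - τ * lam ≤ τ * κ := by
    have h : τ * κ = 1 - τ * (lam * μ) := by
      rw [hκdef]; field_simp
    rw [h]
    nlinarith [mul_le_mul_of_nonneg_left hlamμ hτ.le]
  have hκsum : ∀ s : ℝ, s / τ + -lam * μ * s = κ * s := by
    intro s; rw [hκdef]; field_simp; ring
  clear_value κ
  set E₀ : ℝ := ‖v 0 + (τ : ℂ) * w 0‖ ^ 2
      + r * ‖u 0 + (τ : ℂ) * v 0‖ ^ 2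
      + r * ‖v 0‖ ^ 2 with hE₀def
  have hE₀0 : 0 ≤ E₀ := by
    rw [hE₀def]
    have a2 : (0:ℝ) ≤ r * ‖u 0 + (τ : ℂ) * v 0‖ ^ 2 :=
      mul_nonneg hr0 (sq_nonneg _)
    have a3 : (0:ℝ) ≤ r * ‖v 0‖ ^ 2 := mul_nonneg hr0 (sq_nonneg _)
    have a1 : (0:ℝ) ≤ ‖v 0 + (τ : ℂ) * w 0‖ ^ 2 := sq_nonneg _
    linarith
  clear_value E₀
  set A : ℝ := M * C₀ * r * E₀ with hAdef
  have hA0 : 0 ≤ A := by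
    rw [hAdef]
    exact mul_nonneg (mul_nonneg (mul_nonneg hM0.le hC₀.le) hr0) hE₀0
  have hMr0 : 0 ≤ M * r := mul_nonneg hM0.le hr0
  clear_value A
  set φ : ℝ → ℝ := fun s => Complex.normSq (w s) with hφdef
  set D : ℝ → ℝ := fun s => 2 * ((w s).re * (w' s).re + (w s).im * (w' s).im) with hDdef
  have hφD : ∀ s ≥ (0:ℝ), HasDerivAt φ (D s) s := by
    intro s hs
    have hre : HasDerivAt (fun t => (w t).re) ((w' s).re) s :=
      Complex.reCLM.hasFDerivAt.comp_hasDerivAt s (hw s hs)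
    have him : HasDerivAt (fun t => (w t).im) ((w' s).im) s :=
      Complex.imCLM.hasFDerivAt.comp_hasDerivAt s (hw s hs)
    have h := (hre.mul hre).add (him.mul him)
    have e1 : ((fun t => (w t).re) * (fun t => (w t).re) + (fun t => (w t).im) * (fun t => (w t).im)) = φ := by
      funext x; rw [hφdef]; simp [Complex.normSq_apply]
    rw [e1] at h
    refine h.congr_deriv ?_
    show _ = D s; simp only [hDdef]; ring
  have hkey : ∀ s ≥ (0:ℝ), τ * D s + φ s ≤ A * Real.exp (-lam * μ * s) := by
    intro s hs
    set z : ℂ := u s + (β : ℂ) * v s with hzdef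
    have hz : (τ : ℂ) * w' s = -(r : ℂ) * z - w s := by
      rw [hode s hs, hzdef]; push_cast; ring
    have hre : τ * (w' s).re = -(r * z.re) - (w s).re := by
      have h := congrArg Complex.re hz
      simpa [Complex.mul_re] using h
    have him : τ * (w' s).im = -(r * z.im) - (w s).im := by
      have h := congrArg Complex.im hz
      simpa [Complex.mul_im] using h
    have step1 : τ * D s + φ s ≤ r ^ 2 * Complex.normSq z := by
      have hτD : τ * D s
          = 2 * ((w s).re * (τ * (w' s).re) + (w s).im * (τ * (w' s).im)) := by
        simp only [hDdef]; ring
      rw [hτD, hre, him]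
      simp only [hφdef, Complex.normSq_apply]
      nlinarith [sq_nonneg ((w s).re + r * z.re), sq_nonneg ((w s).im + r * z.im)]
    set X : ℝ := Complex.normSq (u s + (τ : ℂ) * v s) with hXdef
    set Y : ℝ := Complex.normSq (v s) with hYdef
    set Z : ℝ := ‖v s + (τ : ℂ) * w s‖ ^ 2 with hZdef
    have hX : 0 ≤ X := Complex.normSq_nonneg _
    have hY : 0 ≤ Y := Complex.normSq_nonneg _
    have hZ : 0 ≤ Z := sq_nonneg _
    have hsplit : Complex.normSq z ≤ 2 * X + 2 * (β - τ) ^ 2 * Y := by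
      have hzeq : z = (u s + (τ : ℂ) * v s) + ((β - τ : ℝ) : ℂ) * v s := by
        rw [hzdef]; push_cast; ring
      have h := jmgt_normSq_add_le (u s + (τ : ℂ) * v s) (((β - τ : ℝ) : ℂ) * v s)
      rw [← hzeq] at h
      have h2 : Complex.normSq (((β - τ : ℝ) : ℂ) * v s) = (β - τ) ^ 2 * Y := by
        rw [Complex.normSq_mul, Complex.normSq_ofReal, hYdef, sq]
      rw [h2] at h
      rw [hXdef]
      linarith [h]
    have step2 : r ^ 2 * Complex.normSq z ≤ M * r * (Z + r * X + r * Y) := by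
      have h1 : r ^ 2 * Complex.normSq z ≤ r ^ 2 * (2 * X + 2 * (β - τ) ^ 2 * Y) :=
        mul_le_mul_of_nonneg_left hsplit (sq_nonneg r)
      have hrrX : 0 ≤ r * (r * X) := mul_nonneg hr0 (mul_nonneg hr0 hX)
      have hrrY : 0 ≤ r * (r * Y) := mul_nonneg hr0 (mul_nonneg hr0 hY)
      have hrZ : 0 ≤ r * Z := mul_nonneg hr0 hZ
      nlinarith [h1, mul_nonneg (sub_nonneg.2 hM2) hrrX,
        mul_nonneg (sub_nonneg.2 hMb) hrrY, mul_nonneg hM0.le hrZ]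
    have step3 := hEdecay s hs
    have step3' : Z + r * X + r * Y ≤ C₀ * E₀ * Real.exp (-lam * μ * s) := by
      have eX : X = ‖u s + (τ : ℂ) * v s‖ ^ 2 := by
        rw [hXdef, Complex.sq_norm]
      have eY : Y = ‖v s‖ ^ 2 := by rw [hYdef, Complex.sq_norm]
      rw [hZdef, eX, eY]
      exact step3
    calc τ * D s + φ s ≤ r ^ 2 * Complex.normSq z := step1
      _ ≤ M * r * (Z + r * X + r * Y) := step2
      _ ≤ M * r * (C₀ * E₀ * Real.exp (-lam * μ * s)) :=
          mul_le_mul_of_nonneg_left step3' hMr0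
      _ = A * Real.exp (-lam * μ * s) := by rw [hAdef]; ring
  set B : ℝ := A / (τ * κ) with hBdef
  have hB0 : 0 ≤ B := by
    rw [hBdef]; exact div_nonneg hA0 (mul_nonneg hτ.le hκ0.le)
  clear_value B
  set G : ℝ → ℝ := fun s => φ s * Real.exp (s / τ) - B * Real.exp (κ * s) with hGdef
  have hGderiv : ∀ s ≥ (0:ℝ), HasDerivAt G
      (D s * Real.exp (s / τ) + φ s * (Real.exp (s / τ) * (1 / τ))
        - B * (Real.exp (κ * s) * κ)) s := by
    intro s hs
    have h1 : HasDerivAt (fun x : ℝ => Real.exp (x / τ)) (Real.exp (s / τ) * (1 / τ)) s := by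
      simpa using ((hasDerivAt_id s).div_const τ).exp
    have h2 : HasDerivAt (fun x : ℝ => Real.exp (κ * x)) (Real.exp (κ * s) * κ) s := by
      simpa using ((hasDerivAt_id s).const_mul κ).exp
    rw [hGdef]
    exact ((hφD s hs).mul h1).sub (h2.const_mul B)
  have hGle : ∀ s ≥ (0:ℝ),
      D s * Real.exp (s / τ) + φ s * (Real.exp (s / τ) * (1 / τ))
        - B * (Real.exp (κ * s) * κ) ≤ 0 := by
    intro s hs
    have hk := hkey s hs
    have hexp : Real.exp (s / τ) * Real.exp (-lam * μ * s) = Real.exp (κ * s) := by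
      rw [← Real.exp_add, hκsum s]
    have hEp : (0:ℝ) < Real.exp (s / τ) := Real.exp_pos _
    have h3 : D s * Real.exp (s / τ) + φ s * (Real.exp (s / τ) * (1 / τ))
        = (τ * D s + φ s) * Real.exp (s / τ) / τ := by field_simp
    have h4 : (τ * D s + φ s) * Real.exp (s / τ) / τ
        ≤ A * Real.exp (-lam * μ * s) * Real.exp (s / τ) / τ :=
      by exact div_le_div_of_nonneg_right (mul_le_mul_of_nonneg_right hk hEp.le) hτ.le
    have h5 : A * Real.exp (-lam * μ * s) * Real.exp (s / τ) / τ
        = B * (Real.exp (κ * s) * κ) := by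
      rw [hBdef, ← hexp]
      field_simp
    rw [h5] at h4
    rw [h3]
    linarith [h4]
  have hanti : AntitoneOn G (Set.Ici 0) := by
    apply antitoneOn_of_deriv_nonpos (convex_Ici 0)
    · exact fun s hs => ((hGderiv s hs).continuousAt).continuousWithinAt
    · intro s hs
      rw [interior_Ici] at hs
      exact ((hGderiv s (le_of_lt hs)).differentiableAt).differentiableWithinAt
    · intro s hs
      rw [interior_Ici] at hs
      rw [(hGderiv s (le_of_lt hs)).deriv]
      exact hGle s (le_of_lt hs)
  have hGt : G t ≤ G 0 := hanti Set.self_mem_Ici ht ht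
  have hG0 : G 0 = φ 0 - B := by rw [hGdef]; simp
  have hGteq : G t = φ t * Real.exp (t / τ) - B * Real.exp (κ * t) := by rw [hGdef]
  have hmain : φ t * Real.exp (t / τ) ≤ φ 0 + B * Real.exp (κ * t) := by
    rw [hGteq, hG0] at hGt
    nlinarith [Real.exp_pos (κ * t), hGt]
  have hfin : φ t ≤ φ 0 * Real.exp (-(t / τ)) + B * Real.exp (-lam * μ * t) := by
    have h6 : Real.exp (κ * t) * Real.exp (-(t / τ)) = Real.exp (-lam * μ * t) := by
      rw [← Real.exp_add, ← hκsum t]; congr 1; ring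
    have h8 : Real.exp (t / τ) * Real.exp (-(t / τ)) = 1 := by
      rw [← Real.exp_add]; simp
    have h7 := mul_le_mul_of_nonneg_right hmain (Real.exp_pos (-(t / τ))).le
    calc φ t = φ t * (Real.exp (t / τ) * Real.exp (-(t / τ))) := by rw [h8, mul_one]
      _ = φ t * Real.exp (t / τ) * Real.exp (-(t / τ)) := by ring
      _ ≤ (φ 0 + B * Real.exp (κ * t)) * Real.exp (-(t / τ)) := h7
      _ = φ 0 * Real.exp (-(t / τ)) + B * (Real.exp (κ * t) * Real.exp (-(t / τ))) := by
          ring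
      _ = φ 0 * Real.exp (-(t / τ)) + B * Real.exp (-lam * μ * t) := by rw [h6]
  have hBle : B ≤ M * C₀ / (1 - τ * lam) * r * E₀ := by
    rw [hBdef, hAdef]
    have h8 : M * C₀ / (1 - τ * lam) * r * E₀ = M * C₀ * r * E₀ / (1 - τ * lam) := by
      ring
    rw [h8]
    exact div_le_div_of_nonneg_left
      (mul_nonneg (mul_nonneg (mul_nonneg hM0.le hC₀.le) hr0) hE₀0) h1tl hτκ
  have goal2 : ‖w t‖ ^ 2 = φ t := by rw [hφdef, Complex.sq_norm]
  have goal0 : ‖w 0‖ ^ 2 = φ 0 := by rw [hφdef, Complex.sq_norm]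
  rw [goal2, goal0]
  have hneg : -t / τ = -(t / τ) := by ring
  rw [hneg]
  have hlast : B * Real.exp (-lam * μ * t)
      ≤ M * C₀ / (1 - τ * lam) * r * E₀ * Real.exp (-lam * μ * t) :=
    mul_le_mul_of_nonneg_right hBle (Real.exp_pos _).le
  linarith [hfin, hlast]
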